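/- Let E, F, G be Banach spaces, S : E → F a bounded linear operator, and T : E → G a surjective bounded linear operator such that the operator E → F × G, x ↦ (Sx, Tx) is Fredholm. Then T has a bounded linear right inverse. -/

import Mathlib

/-- Lemma (efg): if `S : E → F` is bounded, `T : E → G` is bounded and surjective, and
`x ↦ (Sx, Tx)` is Fredholm (finite-dimensional kernel, closed range of finite codimension),
then `T` has a bounded right inverse. -/
theorem stmt0 {E F G : Type*}
    [NormedAddCommGroup E] [NormedSpace ℝ E] [CompleteSpace E]
    [NormedAddCommGroup F] [NormedSpace ℝ F] [CompleteSpace F]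
    [NormedAddCommGroup G] [NormedSpace ℝ G] [CompleteSpace G]
    (S : E →L[ℝ] F) (T : E →L[ℝ] G)
    (hT : Function.Surjective T)
    (hker : FiniteDimensional ℝ (LinearMap.ker ((S.prod T) : E →ₗ[ℝ] F × G)))
    (hclosed : IsClosed (Set.range (S.prod T)))
    (hcoker : FiniteDimensional ℝ
      ((F × G) ⧸ LinearMap.range ((S.prod T) : E →ₗ[ℝ] F × G))) :
    ∃ R : G →L[ℝ] E, T.comp R = ContinuousLinearMap.id ℝ G := by
  classical
  set P : E →L[ℝ] F × G := S.prod T with hP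
  set K : Submodule ℝ E := LinearMap.ker (P : E →ₗ[ℝ] F × G) with hK
  set W : Submodule ℝ (F × G) := LinearMap.range (P : E →ₗ[ℝ] F × G) with hW
  have hWclosed : IsClosed (W : Set (F × G)) := by
    have : (W : Set (F × G)) = Set.range P := by
      ext x; simp [hW, LinearMap.mem_range, Set.mem_range]
    rw [this]; exact hclosed
  -- K is closed complemented (finite dimensional)
  have hKcc : K.ClosedComplemented := Submodule.ClosedComplemented.of_finiteDimensional K
  obtain ⟨E₀, hE₀closed, hcompl⟩ := hKcc.exists_isClosed_isCompl
  -- W is closed complemented (finite codimension, closed)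
  have hWcc : W.ClosedComplemented := by
    have : FiniteDimensional ℝ ((F × G) ⧸ W) := hcoker
    exact Submodule.ClosedComplemented.of_quotient_finiteDimensional hWclosed
  obtain ⟨π, hπ⟩ := hWcc
  haveI : CompleteSpace E₀ := hE₀closed.completeSpace_coe
  haveI : CompleteSpace W := hWclosed.completeSpace_coe
  -- A : E₀ →L W, bijective
  have hmem : ∀ x : E₀, P (E₀.subtypeL x) ∈ W := fun x => LinearMap.mem_range_self _ _
  set A : E₀ →L[ℝ] W := (P.comp E₀.subtypeL).codRestrict W hmem with hA
  have hAinj : LinearMap.ker (A : E₀ →ₗ[ℝ] W) = ⊥ := by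
    rw [Submodule.eq_bot_iff]
    rintro ⟨x, hx⟩ hker'
    have hPx : P x = 0 := by
      have := congrArg (Subtype.val) (show A ⟨x, hx⟩ = 0 from hker')
      exact this
    have hxK : x ∈ K := hPx
    have : x ∈ K ⊓ E₀ := ⟨hxK, hx⟩
    rw [hcompl.inf_eq_bot] at this
    simpa using this
  have hAsurj : LinearMap.range (A : E₀ →ₗ[ℝ] W) = ⊤ := by
    rw [Submodule.eq_top_iff']
    rintro ⟨y, hy⟩
    obtain ⟨x, hx⟩ := hy
    have hx' : x ∈ K ⊔ E₀ := by rw [hcompl.sup_eq_top]; trivial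
    rcases Submodule.mem_sup.mp hx' with ⟨k, hk, e, he, hke⟩
    refine ⟨⟨e, he⟩, ?_⟩
    apply Subtype.ext
    have hPk : P k = 0 := hk
    have hPe : P e = P x := by rw [← hke, map_add, hPk, zero_add]
    show (P (E₀.subtypeL ⟨e, he⟩) : F × G) = y
    simpa [hPe] using hx
  set eA := ContinuousLinearEquiv.ofBijective A hAinj hAsurj with heA
  -- j : G →L W, g ↦ π (0, g)
  set j : G →L[ℝ] W := π.comp (ContinuousLinearMap.inr ℝ F G) with hj
  set R₀ : G →L[ℝ] E :=
    E₀.subtypeL.comp ((eA.symm : W →L[ℝ] E₀).comp j) with hR₀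
  have hPR₀ : ∀ g : G, P (R₀ g) = (j g : F × G) := by
    intro g
    have : A (eA.symm (j g)) = j g := eA.apply_symm_apply (j g)
    have := congrArg Subtype.val this
    exact this
  -- the "defect" operator
  set D : (F × G) →L[ℝ] F × G :=
    ContinuousLinearMap.id ℝ (F × G) - W.subtypeL.comp π with hD
  set Q : G →L[ℝ] G :=
    (ContinuousLinearMap.snd ℝ F G).comp (D.comp (ContinuousLinearMap.inr ℝ F G)) with hQ
  have hTR₀ : ∀ g : G, T (R₀ g) = g - Q g := by
    intro g
    have h1 : T (R₀ g) = (P (R₀ g)).2 := rfl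
    rw [h1, hPR₀ g]
    simp [hj, hQ, hD]
  -- D kills W, so D factors through the finite-dimensional quotient
  have hDW : W ≤ LinearMap.ker (D : (F × G) →ₗ[ℝ] F × G) := by
    intro w hw
    have : π w = ⟨w, hw⟩ := hπ ⟨w, hw⟩
    simp [LinearMap.mem_ker, hD, this]
  haveI : FiniteDimensional ℝ ((F × G) ⧸ W) := hcoker
  have hDrange : FiniteDimensional ℝ (LinearMap.range (D : (F × G) →ₗ[ℝ] F × G)) := by
    rw [show (D : (F × G) →ₗ[ℝ] F × G) = (W.liftQ (D : (F × G) →ₗ[ℝ] F × G) hDW).comp W.mkQ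
        from (W.liftQ_mkQ _ hDW).symm,
      LinearMap.range_comp, Submodule.range_mkQ, Submodule.map_top]
    infer_instance
  -- range of Q is finite dimensional
  set V : Submodule ℝ G := LinearMap.range (Q : G →ₗ[ℝ] G) with hV
  haveI hVfd : FiniteDimensional ℝ V := by
    have hle : V ≤ (LinearMap.range (D : (F × G) →ₗ[ℝ] F × G)).map
        ((LinearMap.snd ℝ F G)) := by
      rintro _ ⟨g, rfl⟩
      exact ⟨D (0, g), LinearMap.mem_range_self _ _, rfl⟩
    exact Submodule.finiteDimensional_of_le hle
  -- a linear (not necessarily continuous) right inverse of T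
  obtain ⟨L, hL⟩ := (T : E →ₗ[ℝ] G).exists_rightInverse_of_surjective
    (LinearMap.range_eq_top.mpr hT)
  -- restrict to V: continuous since V is finite dimensional
  set Lv : V →L[ℝ] E := LinearMap.toContinuousLinearMap (L.comp V.subtype) with hLv
  set Qv : G →L[ℝ] V := Q.codRestrict V (fun g => LinearMap.mem_range_self _ g) with hQv
  refine ⟨R₀ + Lv.comp Qv, ?_⟩
  ext g
  have hTL : ∀ v : V, T (Lv v) = (v : G) := by
    intro v
    have h0 := LinearMap.congr_fun hL (v : G)
    simpa [hLv] using h0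
  simp only [ContinuousLinearMap.comp_apply, ContinuousLinearMap.add_apply, map_add,
    ContinuousLinearMap.coe_id', id_eq]
  rw [hTR₀ g, hTL (Qv g)]
  have : (Qv g : G) = Q g := rfl
  rw [this]
  abel
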